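/- Let t be a real number lying in the interval (2k − 1, 2k) for some positive integer k (i.e., t is not an integer and its integer part is odd), and let a > 0. Then the kernel K_{t,a}(x, y) = (1/π) · 1/(1 + (x − y)² + a(x² + y²)^t) is not a positive-definite kernel on ℝ × ℝ; that is, there exist n ∈ ℕ, points x₁, …, xₙ ∈ ℝ, and complex numbers c₁, …, cₙ such that ∑_{j=1}^n ∑_{k=1}^n c_j · conj(c_k) · K_{t,a}(x_j, x_k) is not a nonnegative real number. -/

import Mathlib

open Finset ComplexOrder

open fwdDiff

-- Helper: continuity of iterated forward differences on Ici 0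
lemma contOn_fwdDiff_iter (n : ℕ) (f : ℝ → ℝ) (hf : ContinuousOn f (Set.Ici 0)) :
    ContinuousOn ((Δ_[(1:ℝ)])^[n] f) (Set.Ici 0) := by
  induction n generalizing f with
  | zero => simpa using hf
  | succ n ih =>
    rw [Function.iterate_succ_apply]
    apply ih
    have h1 : ContinuousOn (fun y : ℝ => f (y + 1)) (Set.Ici 0) := by
      apply hf.comp (continuous_id.add continuous_const).continuousOn
      intro y hy
      simp only [Set.mem_Ici, id_eq, Pi.add_apply] at *
      linarith
    exact h1.sub hf

-- Helper: derivative of iterated forward differences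
lemma hasDerivAt_fwdDiff_iter (n : ℕ) (f f' : ℝ → ℝ)
    (hf : ∀ u : ℝ, 0 < u → HasDerivAt f (f' u) u) :
    ∀ u : ℝ, 0 < u → HasDerivAt ((Δ_[(1:ℝ)])^[n] f) ((Δ_[(1:ℝ)])^[n] f' u) u := by
  induction n generalizing f f' with
  | zero => simpa using hf
  | succ n ih =>
    intro u hu
    rw [Function.iterate_succ_apply, Function.iterate_succ_apply]
    apply ih (Δ_[(1:ℝ)] f) (Δ_[(1:ℝ)] f') _ u hu
    intro v hv
    have h1 : HasDerivAt (fun y : ℝ => f (y + 1)) (f' (v + 1)) v := by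
      have := (hf (v+1) (by linarith)).comp v ((hasDerivAt_id v).add_const 1)
      simpa [Function.comp_def] using this
    exact h1.sub (hf v hv)

-- Main positivity lemma for iterated forward differences
lemma fwd_pos (m : ℕ) : ∀ (g : ℕ → ℝ → ℝ),
    (∀ i ≤ m, ContinuousOn (g i) (Set.Ici 0)) →
    (∀ i < m, ∀ u : ℝ, 0 < u → HasDerivAt (g i) (g (i+1) u) u) →
    StrictMonoOn (g m) (Set.Ici 0) →
    ∀ x : ℝ, 0 ≤ x → 0 < (Δ_[(1:ℝ)])^[m+1] (g 0) x := by
  induction m with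
  | zero =>
    intro g _ _ hm x hx
    have : (Δ_[(1:ℝ)])^[1] (g 0) x = g 0 (x + 1) - g 0 x := by
      simp [fwdDiff]
    rw [this, sub_pos]
    exact hm hx (by simp only [Set.mem_Ici]; linarith) (by linarith)
  | succ m ih =>
    intro g hc hd hm x hx
    rw [Function.iterate_succ_apply]
    set h : ℕ → ℝ → ℝ := fun i => Δ_[(1:ℝ)] (g i) with hh
    have key : Δ_[(1:ℝ)] (g 0) = h 0 := rfl
    rw [key]
    apply ih h
    · intro i hi
      have h1 : ContinuousOn (fun y : ℝ => g i (y + 1)) (Set.Ici 0) := by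
        apply (hc i (by omega)).comp (continuous_id.add continuous_const).continuousOn
        intro y hy
        simp only [Set.mem_Ici, id_eq, Pi.add_apply] at *
        linarith
      exact h1.sub (hc i (by omega))
    · intro i hi u hu
      have h1 : HasDerivAt (fun y : ℝ => g i (y + 1)) (g (i+1) (u + 1)) u := by
        have := (hd i (by omega) (u+1) (by linarith)).comp u ((hasDerivAt_id u).add_const 1)
        simpa [Function.comp_def] using this
      exact h1.sub (hd i (by omega) u hu)
    · -- StrictMonoOn (h m) (Ici 0)
      apply strictMonoOn_of_deriv_pos (convex_Ici 0)
      · have h1 : ContinuousOn (fun y : ℝ => g m (y + 1)) (Set.Ici 0) := by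
          apply (hc m (by omega)).comp (continuous_id.add continuous_const).continuousOn
          intro y hy
          simp only [Set.mem_Ici, id_eq, Pi.add_apply] at *
          linarith
        exact h1.sub (hc m (by omega))
      · intro u hu
        rw [interior_Ici] at hu
        have hu' : (0:ℝ) < u := hu
        have h1 : HasDerivAt (fun y : ℝ => g m (y + 1)) (g (m+1) (u + 1)) u := by
          have := (hd m (by omega) (u+1) (by linarith)).comp u ((hasDerivAt_id u).add_const 1)
          simpa [Function.comp_def] using this
        have h2 : HasDerivAt (h m) (g (m+1) (u+1) - g (m+1) u) u := h1.sub (hd m (by omega) u hu')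
        rw [h2.deriv, sub_pos]
        exact hm (by simp only [Set.mem_Ici]; linarith) (by simp only [Set.mem_Ici]; linarith)
          (by linarith)
    · exact hx

section
variable (t : ℝ)

noncomputable def gch (t : ℝ) (i : ℕ) : ℝ → ℝ :=
  fun u => (∏ r ∈ Finset.range i, (t - r)) * u ^ (t - i)

lemma gch_cont (i : ℕ) (hi : 0 < t - i) : ContinuousOn (gch t i) (Set.Ici 0) := by
  apply ContinuousOn.mul continuousOn_const
  apply Continuous.continuousOn
  rw [continuous_iff_continuousAt]
  intro u
  exact Real.continuousAt_rpow_const u _ (Or.inr hi.le)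

lemma gch_deriv (i : ℕ) (u : ℝ) (hu : 0 < u) :
    HasDerivAt (gch t i) (gch t (i+1) u) u := by
  have h := (Real.hasDerivAt_rpow_const (p := t - i) (Or.inl hu.ne')).const_mul
    (∏ r ∈ Finset.range i, (t - r))
  refine h.congr_deriv ?_
  unfold gch
  rw [Finset.prod_range_succ]
  push_cast
  rw [show t - ((i:ℝ) + 1) = t - (i:ℝ) - 1 by ring]
  ring

lemma gch_mono (i : ℕ) (hprod : 0 < ∏ r ∈ Finset.range i, (t - r)) (hexp : 0 < t - i) :
    StrictMonoOn (gch t i) (Set.Ici 0) := by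
  intro x hx y _ hxy
  unfold gch
  exact mul_lt_mul_of_pos_left (Real.rpow_lt_rpow hx hxy hexp) hprod

end

lemma Bpos (t : ℝ) (k : ℕ) (hk : 0 < k) (h1 : 2*(k:ℝ) - 1 < t) (h2 : t < 2*(k:ℝ)) :
    0 < ∑ j ∈ Finset.range (k+1), ∑ l ∈ Finset.range (k+1),
      ((-1:ℝ)^j * (k.choose j)) * ((-1:ℝ)^l * (k.choose l)) * ((j:ℝ) + (l:ℝ)) ^ t := by
  obtain ⟨K, rfl⟩ : ∃ K, k = K + 1 := ⟨k - 1, by omega⟩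
  set k := K + 1 with hkdef
  -- basic facts
  have hexp : ∀ i : ℕ, i ≤ 2*K+1 → 0 < t - i := by
    intro i hi
    have : (i:ℝ) ≤ 2*K+1 := by exact_mod_cast hi
    push_cast at h1 ⊢
    have hk' : (k:ℝ) = (K:ℝ) + 1 := Nat.cast_succ K
    nlinarith [hk']
  have hprod : ∀ i : ℕ, i ≤ 2*K+1 → 0 < ∏ r ∈ Finset.range i, (t - r) := by
    intro i hi
    apply Finset.prod_pos
    intro r hr
    rw [Finset.mem_range] at hr
    exact hexp r (by omega)
  -- Step 1 : inner positivity
  have step1 : ∀ x : ℝ, 0 ≤ x → 0 < (Δ_[(1:ℝ)])^[K+1] (gch t (K+1)) x := by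
    have := fwd_pos K (fun i => gch t (K+1+i))
      (fun i hi => gch_cont t _ (hexp _ (by omega)))
      (fun i hi u hu => gch_deriv t (K+1+i) u hu)
      (gch_mono t (K+1+K) (hprod _ (by omega)) (hexp _ (by omega)))
    simpa using this
  -- Step 2 : chain for F i := Δ^[K+1] (gch t i)
  set F : ℕ → ℝ → ℝ := fun i => (Δ_[(1:ℝ)])^[K+1] (gch t i) with hF
  have step3 : 0 < (Δ_[(1:ℝ)])^[K+1] (F 0) 0 := by
    apply fwd_pos K F
    · intro i hi
      exact contOn_fwdDiff_iter _ _ (gch_cont t _ (hexp _ (by omega)))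
    · intro i hi u hu
      exact hasDerivAt_fwdDiff_iter _ _ _ (fun v hv => gch_deriv t i v hv) u hu
    · apply strictMonoOn_of_deriv_pos (convex_Ici 0)
      · exact contOn_fwdDiff_iter _ _ (gch_cont t _ (hexp _ (by omega)))
      · intro u hu
        rw [interior_Ici] at hu
        have hd : HasDerivAt (F K) ((Δ_[(1:ℝ)])^[K+1] (gch t (K+1)) u) u :=
          hasDerivAt_fwdDiff_iter _ _ _ (fun v hv => gch_deriv t K v hv) u hu
        rw [hd.deriv]
        exact step1 u (le_of_lt hu)
    · exact le_refl 0
  -- Step 3 : expand into explicit double sum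
  rw [fwdDiff_iter_eq_sum_shift] at step3
  have expand : ∀ j ∈ Finset.range (K+1+1),
      ((-1:ℤ)^(K+1-j) * ((K+1).choose j)) • (F 0) ((0:ℝ) + j • (1:ℝ))
      = ∑ l ∈ Finset.range (K+1+1), ((-1:ℝ)^(K+1-j) * ((K+1).choose j)) *
          (((-1:ℝ)^(K+1-l) * ((K+1).choose l)) * gch t 0 ((j:ℝ) + (l:ℝ))) := by
    intro j hj
    rw [hF]
    beta_reduce
    rw [fwdDiff_iter_eq_sum_shift, zsmul_eq_mul, Finset.mul_sum]
    apply Finset.sum_congr rfl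
    intro l hl
    rw [zsmul_eq_mul]
    have harg : (0:ℝ) + j • (1:ℝ) + l • (1:ℝ) = (j:ℝ) + l := by simp
    rw [harg]
    push_cast
    ring
  rw [Finset.sum_congr rfl expand] at step3
  -- now convert signs
  have sgn : ∀ j : ℕ, j ≤ K+1 → ((-1:ℝ))^(K+1-j) = (-1)^(K+1) * (-1)^j := by
    intro j hj
    have e1 : ((-1:ℝ))^(K+1-j) * (-1)^j = (-1)^(K+1) := by
      rw [← pow_add, Nat.sub_add_cancel hj]
    have e2 : ((-1:ℝ))^j * (-1)^j = 1 := by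
      rw [← pow_add]
      exact Even.neg_one_pow ⟨j, by ring⟩
    calc ((-1:ℝ))^(K+1-j) = ((-1:ℝ))^(K+1-j) * (((-1:ℝ))^j * (-1)^j) := by rw [e2, mul_one]
    _ = (((-1:ℝ))^(K+1-j) * (-1)^j) * (-1)^j := by ring
    _ = (-1)^(K+1) * (-1)^j := by rw [e1]
  have final : ∑ j ∈ Finset.range (K+1+1), ∑ l ∈ Finset.range (K+1+1),
      ((-1:ℝ)^(K+1-j) * ((K+1).choose j)) *
          (((-1:ℝ)^(K+1-l) * ((K+1).choose l)) * gch t 0 ((j:ℝ) + (l:ℝ)))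
      = ∑ j ∈ Finset.range (K+1+1), ∑ l ∈ Finset.range (K+1+1),
      ((-1:ℝ)^j * ((K+1).choose j)) * (((-1:ℝ)^l * ((K+1).choose l)) * (((j:ℝ) + (l:ℝ)) ^ t)) := by
    apply Finset.sum_congr rfl
    intro j hj
    apply Finset.sum_congr rfl
    intro l hl
    rw [Finset.mem_range] at hj hl
    rw [sgn j (by omega), sgn l (by omega)]
    have : gch t 0 ((j:ℝ) + (l:ℝ)) = ((j:ℝ)+(l:ℝ)) ^ t := by
      unfold gch
      simp
    rw [this]
    have hsq : ((-1:ℝ))^(K+1) * (-1)^(K+1) = 1 := by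
      rw [← pow_add]
      exact Even.neg_one_pow ⟨K+1, by ring⟩
    linear_combination ((-1:ℝ)^j * (((K+1).choose j : ℕ) : ℝ) *
      ((-1:ℝ)^l * (((K+1).choose l : ℕ) : ℝ) * ((j:ℝ)+(l:ℝ)) ^ t)) * hsq
  rw [final] at step3
  convert step3 using 2 with j hj
  apply Finset.sum_congr rfl
  intro l hl
  ring

lemma altmom : ∀ (q k : ℕ), q < k →
    ∑ j ∈ Finset.range (k+1), (-1:ℝ)^j * (k.choose j) * (j:ℝ)^q = 0 := by
  intro q
  induction q using Nat.strong_induction_on with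
  | _ q ih =>
    intro k hk
    match q, ih with
    | 0, _ =>
      have h := Int.alternating_sum_range_choose (n := k)
      rw [if_neg (by omega)] at h
      have h2 : ((∑ m ∈ Finset.range (k+1), ((-1:ℤ))^m * (k.choose m) : ℤ) : ℝ) = 0 := by
        rw [h]; norm_num
      push_cast at h2
      simp only [pow_zero, mul_one]
      exact h2
    | (q'+1), ih =>
      obtain ⟨K, rfl⟩ : ∃ K, k = K + 1 := ⟨k-1, by omega⟩
      rw [Finset.sum_range_succ']
      have hzero : (-1:ℝ)^0 * ((K+1).choose 0) * ((0:ℕ):ℝ)^(q'+1) = 0 := by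
        norm_num
      rw [hzero, add_zero]
      have step : ∀ j ∈ Finset.range (K+1),
          (-1:ℝ)^(j+1) * (((K+1).choose (j+1) : ℕ) : ℝ) * ((↑(j+1) : ℝ))^(q'+1)
          = (-((K:ℝ)+1)) * ∑ s ∈ Finset.range (q'+1),
              ((q'.choose s : ℕ) : ℝ) * ((-1:ℝ)^j * ((K.choose j : ℕ):ℝ) * (j:ℝ)^s) := by
        intro j hj
        have e1 : (((K+1).choose (j+1) : ℕ) : ℝ) * ((j:ℝ)+1) = ((K:ℝ)+1) * ((K.choose j : ℕ) : ℝ) := by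
          exact_mod_cast (Nat.add_one_mul_choose_eq K j).symm
        have e3 : ((j:ℝ)+1)^(q') = ∑ s ∈ Finset.range (q'+1), (j:ℝ)^s * 1^(q'-s) * (q'.choose s) :=
          add_pow _ _ _
        push_cast
        calc (-1:ℝ)^(j+1) * (((K+1).choose (j+1) : ℕ) : ℝ) * ((j:ℝ)+1)^(q'+1)
            = ((-1:ℝ)^(j+1) * ((((K+1).choose (j+1) : ℕ) : ℝ) * ((j:ℝ)+1))) * ((j:ℝ)+1)^q' := by
              ring
          _ = ((-1:ℝ)^(j+1) * (((K:ℝ)+1) * ((K.choose j : ℕ) : ℝ)))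
              * ∑ s ∈ Finset.range (q'+1), (j:ℝ)^s * 1^(q'-s) * (q'.choose s) := by
              rw [e1, ← e3]
          _ = _ := by
              rw [Finset.mul_sum, Finset.mul_sum]
              apply Finset.sum_congr rfl
              intro s hs
              simp only [one_pow]
              push_cast
              ring
      rw [Finset.sum_congr rfl step, ← Finset.mul_sum, Finset.sum_comm]
      have inner0 : ∀ s ∈ Finset.range (q'+1),
          ∑ j ∈ Finset.range (K+1), ((q'.choose s:ℕ):ℝ) * ((-1:ℝ)^j * ((K.choose j:ℕ):ℝ) * (j:ℝ)^s)
          = 0 := by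
        intro s hs
        rw [Finset.mem_range] at hs
        rw [← Finset.mul_sum, ih s (by omega) K (by omega), mul_zero]
      rw [Finset.sum_congr rfl inner0]
      simp

noncomputable def Wc (k j : ℕ) : ℝ := (-1)^j * (k.choose j)
noncomputable def Xp (k : ℕ) (ε : ℝ) (i : ℕ) : ℝ :=
  (if i < k+1 then 1 else -1) * (Real.sqrt ((i % (k+1) : ℕ) : ℝ) * ε)
noncomputable def Gm (k i : ℕ) : ℝ := Wc k (i % (k+1))

lemma sum_pts (k : ℕ) (ε : ℝ) (G : ℝ → ℝ) :
    ∑ i ∈ Finset.range (2*(k+1)), Gm k i * G (Xp k ε i)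
    = ∑ j ∈ Finset.range (k+1),
        Wc k j * (G (Real.sqrt j * ε) + G (-(Real.sqrt j * ε))) := by
  have hsplit : ∑ i ∈ Finset.range (2*(k+1)), Gm k i * G (Xp k ε i)
      = ∑ i ∈ Finset.Ico 0 (k+1), Gm k i * G (Xp k ε i)
        + ∑ i ∈ Finset.Ico (k+1) (2*(k+1)), Gm k i * G (Xp k ε i) := by
    rw [Finset.sum_Ico_consecutive _ (by omega) (by omega), ← Finset.range_eq_Ico]
  rw [hsplit]
  have h1 : ∑ i ∈ Finset.Ico 0 (k+1), Gm k i * G (Xp k ε i)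
      = ∑ j ∈ Finset.range (k+1), Wc k j * G (Real.sqrt j * ε) := by
    rw [← Finset.range_eq_Ico]
    apply Finset.sum_congr rfl
    intro i hi
    rw [Finset.mem_range] at hi
    unfold Gm Xp
    rw [if_pos hi, Nat.mod_eq_of_lt hi, one_mul]
  have h2 : ∑ i ∈ Finset.Ico (k+1) (2*(k+1)), Gm k i * G (Xp k ε i)
      = ∑ j ∈ Finset.range (k+1), Wc k j * G (-(Real.sqrt j * ε)) := by
    rw [Finset.sum_Ico_eq_sum_range]
    have : 2*(k+1) - (k+1) = k+1 := by omega
    rw [this]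
    apply Finset.sum_congr rfl
    intro i hi
    rw [Finset.mem_range] at hi
    unfold Gm Xp
    rw [if_neg (by omega), Nat.add_mod_left, Nat.mod_eq_of_lt hi, neg_one_mul]
  rw [h1, h2, ← Finset.sum_add_distrib]
  apply Finset.sum_congr rfl
  intro j hj
  ring

lemma mom_van (k : ℕ) (ε : ℝ) (p : ℕ) (hp : Odd p ∨ p < 2*k) :
    ∑ i ∈ Finset.range (2*(k+1)), Gm k i * (Xp k ε i)^p = 0 := by
  rw [sum_pts k ε (fun y => y^p)]
  by_cases hodd : Odd p
  · have : ∀ j ∈ Finset.range (k+1),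
        Wc k j * ((Real.sqrt j * ε)^p + (-(Real.sqrt j * ε))^p) = 0 := by
      intro j hj
      rw [Odd.neg_pow hodd]
      ring
    rw [Finset.sum_congr rfl this]
    simp
  · have heven : Even p := Nat.not_odd_iff_even.mp hodd
    have hlt : p < 2*k := by tauto
    obtain ⟨α, hα⟩ := heven
    have hαk : α < k := by omega
    have : ∀ j ∈ Finset.range (k+1),
        Wc k j * ((Real.sqrt j * ε)^p + (-(Real.sqrt j * ε))^p)
        = ((ε^2)^α * 2) * ((-1:ℝ)^j * (k.choose j) * (j:ℝ)^α) := by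
      intro j hj
      rw [Even.neg_pow ⟨α, hα⟩]
      have hsq : (Real.sqrt j * ε)^p = ((j:ℝ) * ε^2)^α := by
        rw [show p = 2*α by omega, pow_mul, mul_pow, Real.sq_sqrt (Nat.cast_nonneg j)]
      rw [hsq, mul_pow]
      unfold Wc
      ring
    rw [Finset.sum_congr rfl this, ← Finset.mul_sum, altmom α k hαk, mul_zero]

lemma poly_van (k : ℕ) (ε : ℝ) (r : ℕ) (hr : r ≤ 2*k - 1) (hk : 0 < k) :
    ∑ i ∈ Finset.range (2*(k+1)), ∑ i' ∈ Finset.range (2*(k+1)),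
      Gm k i * Gm k i' * (Xp k ε i - Xp k ε i')^(2*r) = 0 := by
  have expand : ∀ i ∈ Finset.range (2*(k+1)), ∀ i' ∈ Finset.range (2*(k+1)),
      Gm k i * Gm k i' * (Xp k ε i - Xp k ε i')^(2*r)
      = ∑ p ∈ Finset.range (2*r+1),
          (((2*r).choose p : ℕ) : ℝ) * ((Gm k i * (Xp k ε i)^p) *
            (Gm k i' * (-(Xp k ε i'))^(2*r-p))) := by
    intro i _ i' _
    rw [sub_eq_add_neg, add_pow, Finset.mul_sum]
    apply Finset.sum_congr rfl
    intro p hp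
    ring
  rw [Finset.sum_congr rfl (fun i hi => Finset.sum_congr rfl (expand i hi))]
  rw [Finset.sum_congr rfl (fun i _ => Finset.sum_comm)]
  rw [Finset.sum_comm]
  apply Finset.sum_eq_zero
  intro p hp
  rw [Finset.mem_range] at hp
  have hfac : ∑ i ∈ Finset.range (2*(k+1)), ∑ i' ∈ Finset.range (2*(k+1)),
      (((2*r).choose p : ℕ) : ℝ) * ((Gm k i * (Xp k ε i)^p) * (Gm k i' * (-(Xp k ε i'))^(2*r-p)))
      = (((2*r).choose p : ℕ) : ℝ) *
        ((∑ i ∈ Finset.range (2*(k+1)), Gm k i * (Xp k ε i)^p) *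
         (∑ i' ∈ Finset.range (2*(k+1)), Gm k i' * (-(Xp k ε i'))^(2*r-p))) := by
    rw [Finset.sum_mul_sum, Finset.mul_sum]
    apply Finset.sum_congr rfl
    intro i _
    rw [Finset.mul_sum]
  rw [hfac]
  have key : (∑ i ∈ Finset.range (2*(k+1)), Gm k i * (Xp k ε i)^p) = 0
      ∨ (∑ i' ∈ Finset.range (2*(k+1)), Gm k i' * (-(Xp k ε i'))^(2*r-p)) = 0 := by
    by_cases hodd : Odd p
    · exact Or.inl (mom_van k ε p (Or.inl hodd))
    · by_cases hlt : p < 2*k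
      · exact Or.inl (mom_van k ε p (Or.inr hlt))
      · right
        have hq : ∀ i', (-(Xp k ε i'))^(2*r-p) = (-1:ℝ)^(2*r-p) * (Xp k ε i')^(2*r-p) := by
          intro i'
          rw [neg_pow]
        have : ∑ i' ∈ Finset.range (2*(k+1)), Gm k i' * (-(Xp k ε i'))^(2*r-p)
            = (-1:ℝ)^(2*r-p) * ∑ i' ∈ Finset.range (2*(k+1)),
                Gm k i' * (Xp k ε i')^(2*r-p) := by
          rw [Finset.mul_sum]
          apply Finset.sum_congr rfl
          intro i' _
          rw [hq i']
          ring
        rw [this, mom_van k ε (2*r-p) (Or.inr (by omega)), mul_zero]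
  rcases key with h | h
  · rw [h]; ring
  · rw [h]; ring

lemma mod_sum (k : ℕ) (h : ℕ → ℝ) :
    ∑ i ∈ Finset.range (2*(k+1)), h (i % (k+1)) = 2 * ∑ j ∈ Finset.range (k+1), h j := by
  have hsplit : ∑ i ∈ Finset.range (2*(k+1)), h (i % (k+1))
      = ∑ i ∈ Finset.Ico 0 (k+1), h (i % (k+1))
        + ∑ i ∈ Finset.Ico (k+1) (2*(k+1)), h (i % (k+1)) := by
    rw [Finset.sum_Ico_consecutive _ (by omega) (by omega), ← Finset.range_eq_Ico]
  rw [hsplit]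
  have h1 : ∑ i ∈ Finset.Ico 0 (k+1), h (i % (k+1)) = ∑ j ∈ Finset.range (k+1), h j := by
    rw [← Finset.range_eq_Ico]
    apply Finset.sum_congr rfl
    intro i hi
    rw [Finset.mem_range] at hi
    rw [Nat.mod_eq_of_lt hi]
  have h2 : ∑ i ∈ Finset.Ico (k+1) (2*(k+1)), h (i % (k+1)) = ∑ j ∈ Finset.range (k+1), h j := by
    rw [Finset.sum_Ico_eq_sum_range]
    have he : 2*(k+1) - (k+1) = k+1 := by omega
    rw [he]
    apply Finset.sum_congr rfl
    intro i hi
    rw [Finset.mem_range] at hi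
    rw [Nat.add_mod_left, Nat.mod_eq_of_lt hi]
  rw [h1, h2]
  ring

lemma mod_sum' (k : ℕ) (f g : ℕ → ℝ) (hfg : ∀ i, f i = g (i % (k+1))) :
    ∑ i ∈ Finset.range (2*(k+1)), f i = 2 * ∑ j ∈ Finset.range (k+1), g j := by
  rw [Finset.sum_congr rfl (fun i _ => hfg i)]
  exact mod_sum k g

lemma main_term (k : ℕ) (ε a t : ℝ) :
    ∑ i ∈ Finset.range (2*(k+1)), ∑ i' ∈ Finset.range (2*(k+1)),
      Gm k i * Gm k i' * (a * ((Xp k ε i)^2 + (Xp k ε i')^2) ^ t)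
    = 4 * a * ∑ j ∈ Finset.range (k+1), ∑ l ∈ Finset.range (k+1),
        Wc k j * Wc k l * (((j:ℝ) + (l:ℝ)) * ε^2) ^ t := by
  have hXsq : ∀ i, (Xp k ε i)^2 = ((i % (k+1) : ℕ) : ℝ) * ε^2 := by
    intro i
    unfold Xp
    rcases le_or_gt (k+1) i with h | h
    · rw [if_neg (by omega), mul_pow, mul_pow, Real.sq_sqrt (Nat.cast_nonneg _)]
      ring_nf
    · rw [if_pos h, mul_pow, mul_pow, Real.sq_sqrt (Nat.cast_nonneg _)]
      ring_nf
  have hsum : ∀ i ∈ Finset.range (2*(k+1)),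
      ∑ i' ∈ Finset.range (2*(k+1)),
        Gm k i * Gm k i' * (a * ((Xp k ε i)^2 + (Xp k ε i')^2) ^ t)
      = (fun j : ℕ => Wc k j * ∑ i' ∈ Finset.range (2*(k+1)),
          (fun l : ℕ => Wc k l * (a * ((((j:ℕ):ℝ) + ((l:ℕ):ℝ)) * ε^2) ^ t)) (i' % (k+1)))
            (i % (k+1)) := by
    intro i _
    simp only
    rw [Finset.mul_sum]
    apply Finset.sum_congr rfl
    intro i' _
    rw [hXsq i, hXsq i']
    unfold Gm
    rw [show ((i % (k+1) : ℕ):ℝ) * ε^2 + ((i' % (k+1) : ℕ):ℝ) * ε^2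
        = (((i % (k+1) : ℕ):ℝ) + ((i' % (k+1) : ℕ):ℝ)) * ε^2 by ring]
    ring
  rw [Finset.sum_congr rfl hsum,
    mod_sum' k _ (fun j : ℕ => Wc k j * ∑ i' ∈ Finset.range (2*(k+1)),
      (fun l : ℕ => Wc k l * (a * ((((j:ℕ):ℝ) + ((l:ℕ):ℝ)) * ε^2) ^ t)) (i' % (k+1)))
      (fun i => rfl)]
  have hinner : ∀ j ∈ Finset.range (k+1),
      Wc k j * ∑ i' ∈ Finset.range (2*(k+1)),
        (fun l : ℕ => Wc k l * (a * ((((j:ℕ):ℝ) + ((l:ℕ):ℝ)) * ε^2) ^ t)) (i' % (k+1))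
      = Wc k j * (2 * ∑ l ∈ Finset.range (k+1),
          Wc k l * (a * ((((j:ℕ):ℝ) + ((l:ℕ):ℝ)) * ε^2) ^ t)) := by
    intro j _
    rw [mod_sum' k _ (fun l : ℕ => Wc k l * (a * ((((j:ℕ):ℝ) + ((l:ℕ):ℝ)) * ε^2) ^ t))
      (fun i => rfl)]
  rw [Finset.sum_congr rfl hinner]
  simp only [Finset.mul_sum]
  apply Finset.sum_congr rfl
  intro j _
  apply Finset.sum_congr rfl
  intro l _
  ring

lemma pow_diff_le (u d : ℝ) (h0 : 0 ≤ d) (h1 : d ≤ u) :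
    ∀ n : ℕ, u^(n+1) - d^(n+1) ≤ (n+1) * u^n * (u - d) := by
  intro n
  induction n with
  | zero => simp
  | succ n ih =>
    have hu0 : 0 ≤ u := le_trans h0 h1
    have hdu : d^(n+1) ≤ u^(n+1) := pow_le_pow_left₀ h0 h1 (n+1)
    have key : u^(n+2) - d^(n+2) = u * (u^(n+1) - d^(n+1)) + (u - d) * d^(n+1) := by ring
    rw [key]
    have e1 : u * (u^(n+1) - d^(n+1)) ≤ u * ((n+1) * u^n * (u - d)) :=
      mul_le_mul_of_nonneg_left ih hu0
    have e2 : (u - d) * d^(n+1) ≤ (u - d) * u^(n+1) :=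
      mul_le_mul_of_nonneg_left hdu (by linarith)
    have e3 : u * ((n+1) * u^n * (u - d)) = (n+1) * u^(n+1) * (u - d) := by ring
    push_cast
    nlinarith [e1, e2]

set_option maxHeartbeats 1000000 in
lemma pair_bound (k : ℕ) (hk : 0 < k) (t a ε : ℝ) (ha : 0 < a) (hε : 0 < ε) (hε1 : ε ≤ 1)
    (ht1 : 1 ≤ t) (ht0 : 0 ≤ t)
    (x y : ℝ) (hx : x^2 ≤ k * ε^2) (hy : y^2 ≤ k * ε^2) :
    |(1 + ((x - y)^2 + a * (x^2 + y^2) ^ t))⁻¹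
      - (∑ r ∈ Finset.range (2*k), (-1:ℝ)^r * ((x - y)^2)^r)
      + a * (x^2 + y^2) ^ t|
    ≤ (4*(k:ℝ)^2*(4*k + a*((2*k:ℕ):ℝ)^t + 1)^(2*k+1) + (4*k + a*((2*k:ℕ):ℝ)^t + 1)^(2*k)) *
        ((ε^2)^t * ε^2 + (ε^2)^(2*k)) := by
  set d : ℝ := (x - y)^2 with hd
  set v : ℝ := a * (x^2 + y^2) ^ t with hv
  set u : ℝ := d + v with hu
  set Cv : ℝ := a * ((2*k:ℕ):ℝ)^t with hCv
  set Cu : ℝ := 4*k + Cv + 1 with hCu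
  have hd0 : 0 ≤ d := sq_nonneg _
  have hv0 : 0 ≤ v := mul_nonneg ha.le (Real.rpow_nonneg (by positivity) t)
  have hu0 : 0 ≤ u := by positivity
  have h1u : (0:ℝ) < 1 + u := by linarith
  have hε2 : (0:ℝ) < ε^2 := by positivity
  have hε21 : ε^2 ≤ 1 := by nlinarith
  have hCv0 : 0 ≤ Cv := mul_nonneg ha.le (Real.rpow_nonneg (by positivity) t)
  have hCu1 : 1 ≤ Cu := by
    rw [hCu]
    have : (1:ℝ) ≤ (k:ℝ) := by exact_mod_cast hk
    nlinarith
  have hCu0 : 0 ≤ Cu := by linarith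
  have heps2t : (ε^2)^t ≤ ε^2 := by
    calc (ε^2)^t ≤ (ε^2)^(1:ℝ) := Real.rpow_le_rpow_of_exponent_ge hε2 hε21 ht1
    _ = ε^2 := Real.rpow_one _
  have heps2t0 : 0 ≤ (ε^2)^t := Real.rpow_nonneg hε2.le t
  have hdb : d ≤ 4*k*ε^2 := by
    rw [hd]
    nlinarith [hx, hy, sq_nonneg (x + y)]
  have hvb : v ≤ Cv * (ε^2)^t := by
    rw [hv, hCv]
    have hbase : x^2 + y^2 ≤ ((2*k:ℕ):ℝ) * ε^2 := by push_cast; nlinarith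
    have h1 : (x^2 + y^2)^t ≤ (((2*k:ℕ):ℝ) * ε^2)^t :=
      Real.rpow_le_rpow (by positivity) hbase ht0
    have h2 : (((2*k:ℕ):ℝ) * ε^2)^t = ((2*k:ℕ):ℝ)^t * (ε^2)^t :=
      Real.mul_rpow (by positivity) (by positivity)
    calc a * (x^2 + y^2)^t ≤ a * (((2*k:ℕ):ℝ) * ε^2)^t :=
          mul_le_mul_of_nonneg_left h1 ha.le
      _ = a * ((2*k:ℕ):ℝ)^t * (ε^2)^t := by rw [h2]; ring
  have hub : u ≤ Cu * ε^2 := by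
    rw [hu, hCu]
    have h1 : v ≤ Cv * ε^2 := by
      calc v ≤ Cv * (ε^2)^t := hvb
        _ ≤ Cv * ε^2 := mul_le_mul_of_nonneg_left heps2t hCv0
    nlinarith [hdb]
  -- geometric identity
  have hgeom : (1+u)⁻¹ = (∑ r ∈ Finset.range (2*k), (-u)^r) + u^(2*k) / (1+u) := by
    have h := geom_sum_mul (-u) (2*k)
    rw [Even.neg_pow ⟨k, by ring⟩] at h
    have hsum : (∑ r ∈ Finset.range (2*k), (-u)^r) * (1+u) = 1 - u^(2*k) := by
      linear_combination -h
    calc (1+u)⁻¹ = 1/(1+u) := (one_div _).symm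
      _ = ((1 - u^(2*k)) + u^(2*k))/(1+u) := by ring_nf
      _ = ((∑ r ∈ Finset.range (2*k), (-u)^r)*(1+u) + u^(2*k))/(1+u) := by rw [hsum]
      _ = (∑ r ∈ Finset.range (2*k), (-u)^r)*(1+u)/(1+u) + u^(2*k)/(1+u) := add_div _ _ _
      _ = (∑ r ∈ Finset.range (2*k), (-u)^r) + u^(2*k)/(1+u) := by
          rw [mul_div_assoc, div_self (ne_of_gt h1u), mul_one]
  -- rewrite E
  obtain ⟨m, hm⟩ : ∃ m, 2*k = m + 2 := ⟨2*k - 2, by omega⟩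
  have hmle : m ≤ 2*k := by omega
  have hE : (1+u)⁻¹ - (∑ r ∈ Finset.range (2*k), (-1:ℝ)^r * d^r) + v
      = (∑ r ∈ Finset.range m, (-1:ℝ)^(r+2) * (u^(r+2) - d^(r+2))) + u^(2*k) / (1+u) := by
    rw [hgeom]
    have h1 : ∀ r ∈ Finset.range (2*k), (-u)^r = (-1:ℝ)^r * u^r := by
      intro r _
      rw [neg_pow]
    rw [Finset.sum_congr rfl h1]
    have h2 : ∑ r ∈ Finset.range (2*k), (-1:ℝ)^r * u^r - ∑ r ∈ Finset.range (2*k), (-1:ℝ)^r * d^r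
        = ∑ r ∈ Finset.range (2*k), (-1:ℝ)^r * (u^r - d^r) := by
      rw [← Finset.sum_sub_distrib]
      apply Finset.sum_congr rfl
      intro r _
      ring
    have h4 : ∑ r ∈ Finset.range (2*k), (-1:ℝ)^r * (u^r - d^r)
        = (∑ r ∈ Finset.range m, (-1:ℝ)^(r+2) * (u^(r+2) - d^(r+2))) - v := by
      rw [hm, Finset.sum_range_succ', Finset.sum_range_succ']
      have hc : ∀ r ∈ Finset.range m,
          (-1:ℝ)^(r+1+1) * (u^(r+1+1) - d^(r+1+1)) = (-1:ℝ)^(r+2) * (u^(r+2) - d^(r+2)) := by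
        intro r _
        norm_num
      rw [Finset.sum_congr rfl hc]
      have e0 : (-1:ℝ)^0 * (u^0 - d^0) = 0 := by norm_num
      have e1 : (-1:ℝ)^(0+1) * (u^(0+1) - d^(0+1)) = -v := by
        simp only [pow_one, zero_add]
        rw [hu]; ring
      rw [e0, e1]
      ring
    linarith [h2, h4]
  rw [hE]
  -- bound the two pieces
  have hfrac : |u^(2*k) / (1+u)| ≤ Cu^(2*k) * (ε^2)^(2*k) := by
    rw [abs_of_nonneg (by positivity)]
    have h1 : u^(2*k) / (1+u) ≤ u^(2*k) := by
      apply div_le_self (by positivity)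
      linarith
    have h2 : u^(2*k) ≤ (Cu * ε^2)^(2*k) := pow_le_pow_left₀ hu0 hub _
    calc u^(2*k) / (1+u) ≤ u^(2*k) := h1
      _ ≤ (Cu * ε^2)^(2*k) := h2
      _ = Cu^(2*k) * (ε^2)^(2*k) := by rw [mul_pow]
  have hterm : ∀ r ∈ Finset.range m,
      |(-1:ℝ)^(r+2) * (u^(r+2) - d^(r+2))| ≤ 2*k * Cu^(2*k+1) * ((ε^2)^t * ε^2) := by
    intro r hr
    rw [Finset.mem_range] at hr
    have hdru : d^(r+2) ≤ u^(r+2) := pow_le_pow_left₀ hd0 (by linarith) _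
    rw [abs_mul, abs_pow, abs_neg, abs_one, one_pow, one_mul,
      abs_of_nonneg (by linarith : (0:ℝ) ≤ u^(r+2) - d^(r+2))]
    have h1 := pow_diff_le u d hd0 (by linarith) (r+1)
    have hexp : r+1+1 = r+2 := rfl
    simp only [hexp] at h1
    push_cast at h1
    have hud : u - d = v := by rw [hu]; ring
    rw [hud] at h1
    have h2 : u^(r+1) ≤ Cu^(2*k) * ε^2 := by
      calc u^(r+1) ≤ (Cu * ε^2)^(r+1) := pow_le_pow_left₀ hu0 hub _
        _ = Cu^(r+1) * (ε^2)^(r+1) := mul_pow _ _ _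
        _ ≤ Cu^(2*k) * (ε^2)^1 := by
            apply mul_le_mul
            · exact pow_le_pow_right₀ hCu1 (by omega)
            · exact pow_le_pow_of_le_one hε2.le hε21 (by omega)
            · positivity
            · positivity
        _ = Cu^(2*k) * ε^2 := by rw [pow_one]
    have h3 : ((r:ℝ)+2) ≤ 2*k := by
      have : (r:ℝ) + 2 ≤ (m:ℝ) + 2 := by
        have : (r:ℝ) ≤ m := by exact_mod_cast hr.le
        linarith
      have : ((m:ℝ)+2) = 2*(k:ℝ) := by exact_mod_cast hm.symm
      linarith
    have hvCu : v ≤ Cu * (ε^2)^t := by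
      calc v ≤ Cv * (ε^2)^t := hvb
        _ ≤ Cu * (ε^2)^t := by
            apply mul_le_mul_of_nonneg_right _ heps2t0
            rw [hCu]
            have : (0:ℝ) ≤ (k:ℝ) := by positivity
            nlinarith
    calc u^(r+2) - d^(r+2) ≤ ((r:ℝ)+2) * u^(r+1) * v := by linarith
      _ ≤ (2*k) * (Cu^(2*k) * ε^2) * (Cu * (ε^2)^t) := by
          apply mul_le_mul
          · apply mul_le_mul h3 h2 (by positivity) (by positivity)
          · exact hvCu
          · exact hv0
          · positivity
      _ = 2*k * Cu^(2*k+1) * ((ε^2)^t * ε^2) := by ring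
  -- combine
  have habs : |(∑ r ∈ Finset.range m, (-1:ℝ)^(r+2) * (u^(r+2) - d^(r+2))) + u^(2*k) / (1+u)|
      ≤ (∑ r ∈ Finset.range m, |(-1:ℝ)^(r+2) * (u^(r+2) - d^(r+2))|) + |u^(2*k) / (1+u)| :=
    le_trans (abs_add_le _ _) (by gcongr; exact Finset.abs_sum_le_sum_abs _ _)
  have hsumb : (∑ r ∈ Finset.range m, |(-1:ℝ)^(r+2) * (u^(r+2) - d^(r+2))|)
      ≤ m * (2*k * Cu^(2*k+1) * ((ε^2)^t * ε^2)) := by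
    calc (∑ r ∈ Finset.range m, |(-1:ℝ)^(r+2) * (u^(r+2) - d^(r+2))|)
        ≤ ∑ _r ∈ Finset.range m, 2*k * Cu^(2*k+1) * ((ε^2)^t * ε^2) :=
          Finset.sum_le_sum hterm
      _ = m * (2*k * Cu^(2*k+1) * ((ε^2)^t * ε^2)) := by
          rw [Finset.sum_const, Finset.card_range, nsmul_eq_mul]
  have hmk : (m:ℝ) ≤ 2*(k:ℝ) := by
    have : (m:ℝ) + 2 = 2*(k:ℝ) := by exact_mod_cast hm.symm
    linarith
  have hCupow0 : (0:ℝ) ≤ Cu^(2*k+1) := by positivity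
  calc |(∑ r ∈ Finset.range m, (-1:ℝ)^(r+2) * (u^(r+2) - d^(r+2))) + u^(2*k) / (1+u)|
      ≤ (∑ r ∈ Finset.range m, |(-1:ℝ)^(r+2) * (u^(r+2) - d^(r+2))|) + |u^(2*k) / (1+u)| := habs
    _ ≤ m * (2*k * Cu^(2*k+1) * ((ε^2)^t * ε^2)) + Cu^(2*k) * (ε^2)^(2*k) :=
        add_le_add hsumb hfrac
    _ ≤ (4*(k:ℝ)^2*Cu^(2*k+1) + Cu^(2*k)) * ((ε^2)^t * ε^2 + (ε^2)^(2*k)) := by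
        have h1 : (m:ℝ) * (2*k * Cu^(2*k+1) * ((ε^2)^t * ε^2))
            ≤ 4*(k:ℝ)^2*Cu^(2*k+1) * ((ε^2)^t * ε^2) := by
          have hb : (0:ℝ) ≤ 2*(k:ℝ)*Cu^(2*k+1)*((ε^2)^t*ε^2) := by positivity
          nlinarith [mul_le_mul_of_nonneg_right hmk hb]
        have h2 : (0:ℝ) ≤ (ε^2)^(2*k) := by positivity
        have h3 : (0:ℝ) ≤ (ε^2)^t * ε^2 := by positivity
        have h4 : (0:ℝ) ≤ Cu^(2*k) := by positivity
        have h5 : (0:ℝ) ≤ 4*(k:ℝ)^2*Cu^(2*k+1) * (ε^2)^(2*k) :=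
          mul_nonneg (mul_nonneg (by positivity) hCupow0) h2
        have h6 : (0:ℝ) ≤ Cu^(2*k) * ((ε^2)^t * ε^2) := mul_nonneg h4 h3
        nlinarith [h1, h5, h6]

lemma Gm_abs (k i : ℕ) : |Gm k i| ≤ 2^k := by
  unfold Gm Wc
  rw [abs_mul, abs_pow, abs_neg, abs_one, one_pow, one_mul, Nat.abs_cast]
  have h1 : (i % (k+1)) ∈ Finset.range (k+1) := Finset.mem_range.mpr (Nat.mod_lt _ (by omega))
  have h2 : k.choose (i % (k+1)) ≤ 2^k := by
    calc k.choose (i % (k+1)) ≤ ∑ j ∈ Finset.range (k+1), k.choose j :=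
        Finset.single_le_sum (fun j _ => Nat.zero_le _) h1
      _ = 2^k := Nat.sum_range_choose k
  exact_mod_cast h2

lemma Xp_sq (k : ℕ) (ε : ℝ) (i : ℕ) : (Xp k ε i)^2 = ((i % (k+1) : ℕ) : ℝ) * ε^2 := by
  unfold Xp
  rcases le_or_gt (k+1) i with h | h
  · rw [if_neg (by omega), mul_pow, mul_pow, Real.sq_sqrt (Nat.cast_nonneg _)]
    ring_nf
  · rw [if_pos h, mul_pow, mul_pow, Real.sq_sqrt (Nat.cast_nonneg _)]
    ring_nf

lemma Xp_sq_le (k : ℕ) (ε : ℝ) (i : ℕ) : (Xp k ε i)^2 ≤ (k:ℝ) * ε^2 := by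
  rw [Xp_sq]
  have h1 : (i % (k+1)) < k+1 := Nat.mod_lt _ (by omega)
  have h2 : ((i % (k+1) : ℕ) : ℝ) ≤ (k:ℝ) := by exact_mod_cast Nat.lt_succ_iff.mp h1
  nlinarith [sq_nonneg ε]

lemma double_split (n : ℕ) (F G H : ℕ → ℕ → ℝ) :
    ∑ i ∈ Finset.range n, ∑ i' ∈ Finset.range n, (F i i' - G i i' + H i i')
    = (∑ i ∈ Finset.range n, ∑ i' ∈ Finset.range n, F i i')
      - (∑ i ∈ Finset.range n, ∑ i' ∈ Finset.range n, G i i')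
      + (∑ i ∈ Finset.range n, ∑ i' ∈ Finset.range n, H i i') := by
  rw [← Finset.sum_sub_distrib, ← Finset.sum_add_distrib]
  apply Finset.sum_congr rfl
  intro i _
  rw [← Finset.sum_sub_distrib, ← Finset.sum_add_distrib]

set_option maxHeartbeats 2000000 in
lemma core (t a : ℝ) (k : ℕ) (hk : 0 < k) (ht1 : 2*(k:ℝ)-1 < t) (ht2 : t < 2*(k:ℝ)) (ha : 0 < a) :
    ∃ ε : ℝ, 0 < ε ∧ ∑ i ∈ Finset.range (2*(k+1)), ∑ i' ∈ Finset.range (2*(k+1)),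
      Gm k i * Gm k i' *
        (1 + (Xp k ε i - Xp k ε i')^2 + a*((Xp k ε i)^2 + (Xp k ε i')^2)^t)⁻¹ < 0 := by
  have hkR : (1:ℝ) ≤ (k:ℝ) := by exact_mod_cast hk
  have ht1' : 1 ≤ t := by nlinarith
  have ht0 : 0 ≤ t := by linarith
  set n : ℕ := 2*(k+1) with hndef
  -- constants
  set Cu : ℝ := 4*(k:ℝ) + a*((2*k:ℕ):ℝ)^t + 1 with hCudef
  set CC : ℝ := 4*(k:ℝ)^2*Cu^(2*k+1) + Cu^(2*k) with hCCdef
  have hCu0 : 0 ≤ Cu := by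
    rw [hCudef]
    have := Real.rpow_nonneg (show (0:ℝ) ≤ ((2*k:ℕ):ℝ) by positivity) t
    nlinarith
  have hCC0 : 0 ≤ CC := by
    rw [hCCdef]
    positivity
  set CF : ℝ := (n:ℝ)^2 * (2^k * 2^k * CC) + 1 with hCFdef
  have hCF : 0 < CF := by
    rw [hCFdef]
    positivity
  -- B
  set B : ℝ := ∑ j ∈ Finset.range (k+1), ∑ l ∈ Finset.range (k+1),
      Wc k j * Wc k l * ((j:ℝ) + (l:ℝ))^t with hBdef
  have hB : 0 < B := by
    rw [hBdef]
    unfold Wc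
    exact Bpos t k hk ht1 ht2
  -- epsilon choice
  set γ : ℝ := 2*(k:ℝ) - t with hγdef
  have hγ : 0 < γ := by rw [hγdef]; linarith
  have habCF : 0 < a*B/CF := by positivity
  set η : ℝ := min (min 1 (a*B/CF)) ((a*B/CF)^(γ⁻¹)) with hηdef
  have hη0 : 0 < η := by
    rw [hηdef]
    exact lt_min (lt_min one_pos habCF) (Real.rpow_pos_of_pos habCF _)
  have hη1 : η ≤ 1 := le_trans (min_le_left _ _) (min_le_left _ _)
  have hη2 : η ≤ a*B/CF := le_trans (min_le_left _ _) (min_le_right _ _)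
  have hη3 : η ^ γ ≤ a*B/CF := by
    have h1 : η ≤ (a*B/CF)^(γ⁻¹) := min_le_right _ _
    have h2 : η ^ γ ≤ ((a*B/CF)^(γ⁻¹))^γ := Real.rpow_le_rpow hη0.le h1 hγ.le
    rwa [← Real.rpow_mul habCF.le, inv_mul_cancel₀ hγ.ne', Real.rpow_one] at h2
  set ε : ℝ := Real.sqrt η with hεdef
  have hε0 : 0 < ε := Real.sqrt_pos.mpr hη0
  have hεη : ε^2 = η := Real.sq_sqrt hη0.le
  have hε1 : ε ≤ 1 := by
    rw [hεdef]
    calc Real.sqrt η ≤ Real.sqrt 1 := Real.sqrt_le_sqrt hη1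
      _ = 1 := Real.sqrt_one
  refine ⟨ε, hε0, ?_⟩
  -- error term
  set Er : ℕ → ℕ → ℝ := fun i i' =>
    (1 + (Xp k ε i - Xp k ε i')^2 + a*((Xp k ε i)^2 + (Xp k ε i')^2)^t)⁻¹
    - (∑ r ∈ Finset.range (2*k), (-1:ℝ)^r * ((Xp k ε i - Xp k ε i')^2)^r)
    + a*((Xp k ε i)^2 + (Xp k ε i')^2)^t with hErdef
  have hdecomp : ∀ i i' : ℕ,
      Gm k i * Gm k i' *
        (1 + (Xp k ε i - Xp k ε i')^2 + a*((Xp k ε i)^2 + (Xp k ε i')^2)^t)⁻¹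
      = Gm k i * Gm k i' * (∑ r ∈ Finset.range (2*k), (-1:ℝ)^r * ((Xp k ε i - Xp k ε i')^2)^r)
        - Gm k i * Gm k i' * (a*((Xp k ε i)^2 + (Xp k ε i')^2)^t)
        + Gm k i * Gm k i' * Er i i' := by
    intro i i'
    rw [hErdef]
    ring
  have hsplit : ∑ i ∈ Finset.range n, ∑ i' ∈ Finset.range n,
      Gm k i * Gm k i' *
        (1 + (Xp k ε i - Xp k ε i')^2 + a*((Xp k ε i)^2 + (Xp k ε i')^2)^t)⁻¹
      = (∑ i ∈ Finset.range n, ∑ i' ∈ Finset.range n, Gm k i * Gm k i' *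
          (∑ r ∈ Finset.range (2*k), (-1:ℝ)^r * ((Xp k ε i - Xp k ε i')^2)^r))
        - (∑ i ∈ Finset.range n, ∑ i' ∈ Finset.range n, Gm k i * Gm k i' *
            (a*((Xp k ε i)^2 + (Xp k ε i')^2)^t))
        + (∑ i ∈ Finset.range n, ∑ i' ∈ Finset.range n, Gm k i * Gm k i' * Er i i') := by
    rw [Finset.sum_congr rfl (fun i _ => Finset.sum_congr rfl (fun i' _ => hdecomp i i'))]
    exact double_split n _ _ _
  -- vanishing polynomial part
  have hP : ∑ i ∈ Finset.range n, ∑ i' ∈ Finset.range n, Gm k i * Gm k i' *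
      (∑ r ∈ Finset.range (2*k), (-1:ℝ)^r * ((Xp k ε i - Xp k ε i')^2)^r) = 0 := by
    have hPin : ∀ i ∈ Finset.range n, ∀ i' ∈ Finset.range n,
        Gm k i * Gm k i' * (∑ r ∈ Finset.range (2*k), (-1:ℝ)^r * ((Xp k ε i - Xp k ε i')^2)^r)
        = ∑ r ∈ Finset.range (2*k),
            (-1:ℝ)^r * (Gm k i * Gm k i' * (Xp k ε i - Xp k ε i')^(2*r)) := by
      intro i _ i' _
      rw [Finset.mul_sum]
      apply Finset.sum_congr rfl
      intro r _
      rw [pow_mul]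
      ring
    rw [Finset.sum_congr rfl (fun i hi => Finset.sum_congr rfl (hPin i hi))]
    rw [Finset.sum_congr rfl (fun i _ => Finset.sum_comm)]
    rw [Finset.sum_comm]
    apply Finset.sum_eq_zero
    intro r hr
    rw [Finset.mem_range] at hr
    have hz := poly_van k ε r (by omega) hk
    have hpull : ∑ i ∈ Finset.range n, ∑ i' ∈ Finset.range n,
        (-1:ℝ)^r * (Gm k i * Gm k i' * (Xp k ε i - Xp k ε i')^(2*r))
        = (-1:ℝ)^r * ∑ i ∈ Finset.range n, ∑ i' ∈ Finset.range n,
            Gm k i * Gm k i' * (Xp k ε i - Xp k ε i')^(2*r) := by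
      rw [Finset.mul_sum]
      apply Finset.sum_congr rfl
      intro i _
      rw [Finset.mul_sum]
    rw [hpull, hndef, hz, mul_zero]
  -- main term
  have hV : ∑ i ∈ Finset.range n, ∑ i' ∈ Finset.range n, Gm k i * Gm k i' *
      (a*((Xp k ε i)^2 + (Xp k ε i')^2)^t) = 4*a*(B * (ε^2)^t) := by
    rw [hndef]
    rw [main_term k ε a t]
    have hconv : ∀ j ∈ Finset.range (k+1), ∀ l ∈ Finset.range (k+1),
        Wc k j * Wc k l * (((j:ℝ) + (l:ℝ)) * ε^2)^t
        = (Wc k j * Wc k l * ((j:ℝ) + (l:ℝ))^t) * (ε^2)^t := by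
      intro j _ l _
      rw [Real.mul_rpow (by positivity) (by positivity)]
      ring
    rw [Finset.sum_congr rfl (fun j hj => Finset.sum_congr rfl (hconv j hj))]
    rw [hBdef, Finset.sum_mul]
    congr 1
    apply Finset.sum_congr rfl
    intro j _
    rw [Finset.sum_mul]
  -- error bound
  set D : ℝ := (ε^2)^t * ε^2 + (ε^2)^(2*k) with hDdef
  have hD0 : 0 ≤ D := by rw [hDdef]; positivity
  have hpb : ∀ i i' : ℕ, |Er i i'| ≤ CC * D := by
    intro i i'
    have h := pair_bound k hk t a ε ha hε0 hε1 ht1' ht0 (Xp k ε i) (Xp k ε i')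
      (Xp_sq_le k ε i) (Xp_sq_le k ε i')
    rw [← add_assoc] at h
    rw [hErdef]
    simp only
    rw [hCCdef, hCudef, hDdef]
    exact h
  have hEtot : |∑ i ∈ Finset.range n, ∑ i' ∈ Finset.range n, Gm k i * Gm k i' * Er i i'|
      ≤ CF * D := by
    have h1 : |∑ i ∈ Finset.range n, ∑ i' ∈ Finset.range n, Gm k i * Gm k i' * Er i i'|
        ≤ ∑ i ∈ Finset.range n, ∑ i' ∈ Finset.range n, |Gm k i * Gm k i' * Er i i'| :=
      le_trans (Finset.abs_sum_le_sum_abs _ _)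
        (Finset.sum_le_sum (fun i _ => Finset.abs_sum_le_sum_abs _ _))
    have h2 : ∀ i ∈ Finset.range n, ∀ i' ∈ Finset.range n,
        |Gm k i * Gm k i' * Er i i'| ≤ 2^k * 2^k * (CC * D) := by
      intro i _ i' _
      rw [abs_mul, abs_mul]
      have e1 : |Gm k i| * |Gm k i'| ≤ 2^k * 2^k :=
        mul_le_mul (Gm_abs k i) (Gm_abs k i') (abs_nonneg _) (by positivity)
      have e2 : (0:ℝ) ≤ CC * D := mul_nonneg hCC0 hD0
      calc |Gm k i| * |Gm k i'| * |Er i i'| ≤ (2^k * 2^k) * (CC * D) := by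
            apply mul_le_mul e1 (hpb i i') (abs_nonneg _) (by positivity)
        _ = 2^k * 2^k * (CC * D) := by ring
    have h3 : ∑ i ∈ Finset.range n, ∑ i' ∈ Finset.range n, |Gm k i * Gm k i' * Er i i'|
        ≤ ∑ i ∈ Finset.range n, ∑ i' ∈ Finset.range n, (2:ℝ)^k * 2^k * (CC * D) :=
      Finset.sum_le_sum (fun i hi => Finset.sum_le_sum (h2 i hi))
    have h4 : ∑ i ∈ Finset.range n, ∑ i' ∈ Finset.range n, (2:ℝ)^k * 2^k * (CC * D)
        = (n:ℝ) * ((n:ℝ) * ((2:ℝ)^k * 2^k * (CC * D))) := by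
      rw [Finset.sum_const, Finset.card_range, nsmul_eq_mul, Finset.sum_const,
        Finset.card_range, nsmul_eq_mul]
    have h5 : (n:ℝ) * ((n:ℝ) * ((2:ℝ)^k * 2^k * (CC * D))) ≤ CF * D := by
      rw [hCFdef]
      have : (0:ℝ) ≤ (n:ℝ) := by positivity
      nlinarith [hD0, mul_nonneg hCC0 hD0]
    linarith [h1, h3]
  -- final estimate
  rw [hsplit, hP, hV]
  have hEub : ∑ i ∈ Finset.range n, ∑ i' ∈ Finset.range n, Gm k i * Gm k i' * Er i i'
      ≤ CF * D := le_trans (le_abs_self _) hEtot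
  have hηt0 : 0 < η^t := Real.rpow_pos_of_pos hη0 t
  have hDval : D = η^t * η + η^t * η^γ := by
    rw [hDdef, hεη]
    have e1 : η^(2*k) = η^((2*k : ℕ) : ℝ) := (Real.rpow_natCast η (2*k)).symm
    have e2 : ((2*k : ℕ) : ℝ) = t + γ := by
      rw [hγdef]
      push_cast
      ring
    rw [e1, e2, Real.rpow_add hη0]
  have hone : CF * (η^t * η) ≤ a*B*η^t := by
    have h1 : η * CF ≤ a*B := (le_div_iff₀ hCF).mp hη2
    nlinarith [hηt0.le]
  have htwo : CF * (η^t * η^γ) ≤ a*B*η^t := by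
    have h1 : η^γ * CF ≤ a*B := (le_div_iff₀ hCF).mp hη3
    nlinarith [hηt0.le]
  have habB : 0 < a*B*η^t := by positivity
  have hfin : CF * D ≤ 2*(a*B*η^t) := by
    rw [hDval, mul_add]
    linarith
  rw [hεη]
  nlinarith [hEub, hfin, habB]

/-- If `t ∈ (2k−1, 2k)` for some positive integer `k` and `a > 0`, then
the kernel `K_{t,a}` is not positive-definite on `ℝ × ℝ`. -/
theorem stmt3 (t a : ℝ) (k : ℕ) (hk : 0 < k)
    (ht : t ∈ Set.Ioo (2 * (k : ℝ) - 1) (2 * (k : ℝ))) (ha : 0 < a) :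
    ∃ (n : ℕ) (x : Fin n → ℝ) (c : Fin n → ℂ),
      ¬ (0 ≤ ∑ j, ∑ k, c j * (starRingEnd ℂ) (c k) *
        (((1 / Real.pi) * (1 + (x j - x k) ^ 2 + a * ((x j) ^ 2 + (x k) ^ 2) ^ t) ⁻¹ : ℝ) : ℂ)) := by
  
  obtain ⟨ht1, ht2⟩ := ht
  have ht1' : 2*(k:ℝ)-1 < t := by linarith
  have ht2' : t < 2*(k:ℝ) := by linarith
  obtain ⟨ε, hε0, hcore⟩ := core t a k hk ht1' ht2' ha
  refine ⟨2*(k+1), fun i => Xp k ε i.val, fun i => ((Gm k i.val : ℝ) : ℂ), ?_⟩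
  intro hle
  set Sinner : ℝ := ∑ i ∈ Finset.range (2*(k+1)), ∑ i' ∈ Finset.range (2*(k+1)),
      Gm k i * Gm k i' *
        (1 + (Xp k ε i - Xp k ε i')^2 + a*((Xp k ε i)^2 + (Xp k ε i')^2)^t)⁻¹ with hSdef
  have hπ : (0:ℝ) < Real.pi := Real.pi_pos
  have hkey : (∑ j : Fin (2*(k+1)), ∑ l : Fin (2*(k+1)),
      ((Gm k j.val : ℝ):ℂ) * (starRingEnd ℂ) ((Gm k l.val : ℝ):ℂ) *
        (((1/Real.pi) * (1 + (Xp k ε j.val - Xp k ε l.val)^2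
          + a*((Xp k ε j.val)^2 + (Xp k ε l.val)^2)^t)⁻¹ : ℝ) : ℂ))
      = (((1/Real.pi) * Sinner : ℝ) : ℂ) := by
    have e1 : ∀ (j l : Fin (2*(k+1))),
        ((Gm k j.val : ℝ):ℂ) * (starRingEnd ℂ) ((Gm k l.val : ℝ):ℂ) *
          (((1/Real.pi) * (1 + (Xp k ε j.val - Xp k ε l.val)^2
            + a*((Xp k ε j.val)^2 + (Xp k ε l.val)^2)^t)⁻¹ : ℝ) : ℂ)
        = (((1/Real.pi) * (Gm k j.val * Gm k l.val *
            (1 + (Xp k ε j.val - Xp k ε l.val)^2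
              + a*((Xp k ε j.val)^2 + (Xp k ε l.val)^2)^t)⁻¹) : ℝ) : ℂ) := by
      intro j l
      rw [Complex.conj_ofReal]
      push_cast
      ring
    rw [Finset.sum_congr rfl (fun j _ => Finset.sum_congr rfl (fun l _ => e1 j l))]
    have e2 : ∀ (j : Fin (2*(k+1))),
        ∑ l : Fin (2*(k+1)), (((1/Real.pi) * (Gm k j.val * Gm k l.val *
            (1 + (Xp k ε j.val - Xp k ε l.val)^2
              + a*((Xp k ε j.val)^2 + (Xp k ε l.val)^2)^t)⁻¹) : ℝ) : ℂ)
        = ((( ∑ i' ∈ Finset.range (2*(k+1)), (1/Real.pi) * (Gm k j.val * Gm k i' *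
            (1 + (Xp k ε j.val - Xp k ε i')^2
              + a*((Xp k ε j.val)^2 + (Xp k ε i')^2)^t)⁻¹)) : ℝ) : ℂ) := by
      intro j
      rw [Complex.ofReal_sum]
      exact Fin.sum_univ_eq_sum_range (fun i' => ((((1/Real.pi) * (Gm k j.val * Gm k i' *
            (1 + (Xp k ε j.val - Xp k ε i')^2
              + a*((Xp k ε j.val)^2 + (Xp k ε i')^2)^t)⁻¹)) : ℝ) : ℂ)) (2*(k+1))
    rw [Finset.sum_congr rfl (fun j _ => e2 j)]
    rw [show (∑ j : Fin (2*(k+1)), ((( ∑ i' ∈ Finset.range (2*(k+1)),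
        (1/Real.pi) * (Gm k j.val * Gm k i' *
            (1 + (Xp k ε j.val - Xp k ε i')^2
              + a*((Xp k ε j.val)^2 + (Xp k ε i')^2)^t)⁻¹)) : ℝ) : ℂ))
        = ((( ∑ i ∈ Finset.range (2*(k+1)), ∑ i' ∈ Finset.range (2*(k+1)),
        (1/Real.pi) * (Gm k i * Gm k i' *
            (1 + (Xp k ε i - Xp k ε i')^2
              + a*((Xp k ε i)^2 + (Xp k ε i')^2)^t)⁻¹)) : ℝ) : ℂ) from by
      rw [Complex.ofReal_sum]
      exact Fin.sum_univ_eq_sum_range (fun i => ((( ∑ i' ∈ Finset.range (2*(k+1)),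
        (1/Real.pi) * (Gm k i * Gm k i' *
            (1 + (Xp k ε i - Xp k ε i')^2
              + a*((Xp k ε i)^2 + (Xp k ε i')^2)^t)⁻¹)) : ℝ) : ℂ)) (2*(k+1))]
    rw [Complex.ofReal_inj]
    rw [hSdef, Finset.mul_sum]
    apply Finset.sum_congr rfl
    intro i _
    rw [Finset.mul_sum]
  rw [hkey] at hle
  rw [Complex.zero_le_real] at hle
  have hneg : (1/Real.pi) * Sinner < 0 := mul_neg_of_pos_of_neg (by positivity) hcore
  linarith
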